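/- Let M ≥ 1, let u_1, …, u_M be real numbers, and let H be an integer with 0 ≤ H ≤ M. Consider the polynomial in the variable b: Q_H(b) = ∑_{A ⊆ {1,…,M}, |A| = H} ∏_{i ∈ A} (b + u_i) · ∏_{j ∉ A} (b − u_j). Then the coefficient of b^M in Q_H equals C(M,H), and the coefficient of b^{M−1} in Q_H equals ( C(M−1, H−1) − C(M−1, H) ) · ∑_{m=1}^{M} u_m, where C(n,k) denotes the binomial coefficient (with the convention C(n,k) = 0 when k < 0 or k > n). -/
import Mathlib


open Polynomial

/-- The polynomial `Q_H(b) = ∑_{|A| = H} ∏_{i ∈ A} (b + u_i) ∏_{j ∉ A} (b - u_j)`. -/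
noncomputable def Qpoly (M : ℕ) (u : Fin M → ℝ) (H : ℕ) : Polynomial ℝ :=
  ∑ A ∈ Finset.powersetCard H (Finset.univ : Finset (Fin M)),
    (∏ i ∈ A, (X + Polynomial.C (u i))) * ∏ j ∈ Aᶜ, (X - Polynomial.C (u j))

/-- Binomial coefficient `C(n,k)` for an integer `k`, with the convention `C(n,k) = 0` when
`k < 0` or `k > n`. -/
def intChoose (n : ℕ) (k : ℤ) : ℝ :=
  if 0 ≤ k then (n.choose k.toNat : ℝ) else 0

/-- Each summand is a product over `univ` of linear factors with signed constants. -/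
lemma summand_eq (M : ℕ) (u : Fin M → ℝ) (A : Finset (Fin M)) :
    (∏ i ∈ A, (X + Polynomial.C (u i))) * ∏ j ∈ Aᶜ, (X - Polynomial.C (u j))
      = ∏ i : Fin M, (X + Polynomial.C (if i ∈ A then u i else -u i)) := by
  rw [← Finset.prod_mul_prod_compl A fun i => (X + Polynomial.C (if i ∈ A then u i else -u i))]
  congr 1
  · exact Finset.prod_congr rfl fun i hi => by rw [if_pos hi]
  · refine Finset.prod_congr rfl fun j hj => ?_
    rw [if_neg (Finset.mem_compl.mp hj), map_neg, sub_eq_add_neg]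

lemma coeff_top (M : ℕ) (v : Fin M → ℝ) :
    (∏ i : Fin M, (X + Polynomial.C (v i))).coeff M = 1 := by
  have h : (M : ℕ) ≤ (Finset.univ : Finset (Fin M)).card := by simp
  rw [Finset.prod_X_add_C_coeff _ _ h]
  simp

lemma coeff_sub_one (M : ℕ) (hM : 1 ≤ M) (v : Fin M → ℝ) :
    (∏ i : Fin M, (X + Polynomial.C (v i))).coeff (M - 1) = ∑ i, v i := by
  have h : M - 1 ≤ (Finset.univ : Finset (Fin M)).card := by
    simp [Nat.sub_le]
  rw [Finset.prod_X_add_C_coeff _ _ h]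
  have hc : (Finset.univ : Finset (Fin M)).card - (M - 1) = 1 := by
    simp; omega
  rw [hc, Finset.powersetCard_one, Finset.sum_map]
  simp

/-- Counting subsets of size `H` containing a fixed element. -/
lemma count_mem (M H : ℕ) (i : Fin M) (hH : 1 ≤ H) :
    ((Finset.powersetCard H (Finset.univ : Finset (Fin M))).filter (fun A => i ∈ A)).card
      = (M - 1).choose (H - 1) := by
  have : ((Finset.powersetCard H (Finset.univ : Finset (Fin M))).filter (fun A => i ∈ A)).card
      = (Finset.powersetCard (H - 1) ((Finset.univ : Finset (Fin M)).erase i)).card := by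
    apply Finset.card_bij (fun A _ => A.erase i)
    · intro A hA
      simp only [Finset.mem_filter, Finset.mem_powersetCard] at hA
      simp only [Finset.mem_powersetCard]
      refine ⟨fun x hx => ?_, ?_⟩
      · simp only [Finset.mem_erase] at hx ⊢
        exact ⟨hx.1, Finset.mem_univ _⟩
      · rw [Finset.card_erase_of_mem hA.2, hA.1.2]
    · intro A hA B hB hAB
      simp only [Finset.mem_filter] at hA hB
      have : insert i (A.erase i) = insert i (B.erase i) := by rw [hAB]
      rwa [Finset.insert_erase hA.2, Finset.insert_erase hB.2] at this
    · intro B hB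
      simp only [Finset.mem_powersetCard] at hB
      refine ⟨insert i B, ?_, ?_⟩
      · simp only [Finset.mem_filter, Finset.mem_powersetCard]
        have hiB : i ∉ B := fun h => (Finset.mem_erase.mp (hB.1 h)).1 rfl
        refine ⟨⟨fun x _ => Finset.mem_univ _, ?_⟩, Finset.mem_insert_self _ _⟩
        rw [Finset.card_insert_of_notMem hiB, hB.2]; omega
      · rw [Finset.erase_insert (fun h => (Finset.mem_erase.mp (hB.1 h)).1 rfl)]
  rw [this, Finset.card_powersetCard, Finset.card_erase_of_mem (Finset.mem_univ i),
    Finset.card_univ, Fintype.card_fin]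

lemma sum_sum_mem (M H : ℕ) (u : Fin M → ℝ) (hH : 1 ≤ H) :
    ∑ A ∈ Finset.powersetCard H (Finset.univ : Finset (Fin M)), ∑ i ∈ A, u i
      = ((M - 1).choose (H - 1) : ℝ) * ∑ m, u m := by
  have : ∀ A ∈ Finset.powersetCard H (Finset.univ : Finset (Fin M)),
      ∑ i ∈ A, u i = ∑ i : Fin M, if i ∈ A then u i else 0 := by
    intro A _
    rw [Finset.sum_ite_mem, Finset.univ_inter]
  rw [Finset.sum_congr rfl this, Finset.sum_comm]
  rw [Finset.mul_sum, Finset.sum_congr rfl (fun i _ => ?_)]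
  rw [← Finset.sum_filter, Finset.sum_const, count_mem M H i hH]
  simp [mul_comm]

/-- The two leading coefficients of `Q_H`:
the coefficient of `b^M` is `C(M,H)` and the coefficient of `b^{M-1}` is
`(C(M-1,H-1) - C(M-1,H)) ∑_m u_m`. -/
theorem stmt_16 (M : ℕ) (hM : 1 ≤ M) (u : Fin M → ℝ) (H : ℕ) (hH : H ≤ M) :
    (Qpoly M u H).coeff M = (M.choose H : ℝ) ∧
    (Qpoly M u H).coeff (M - 1) =
      (intChoose (M - 1) ((H : ℤ) - 1) - intChoose (M - 1) (H : ℤ)) * ∑ m, u m := by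
  constructor
  · rw [Qpoly, Polynomial.finset_sum_coeff]
    rw [Finset.sum_congr rfl (fun A _ => by rw [summand_eq, coeff_top])]
    rw [Finset.sum_const, Finset.card_powersetCard, Finset.card_univ, Fintype.card_fin]
    simp
  · rw [Qpoly, Polynomial.finset_sum_coeff]
    have step : ∀ A ∈ Finset.powersetCard H (Finset.univ : Finset (Fin M)),
        ((∏ i ∈ A, (X + Polynomial.C (u i))) * ∏ j ∈ Aᶜ, (X - Polynomial.C (u j))).coeff (M - 1)
          = 2 * (∑ i ∈ A, u i) - ∑ m, u m := by
      intro A hA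
      rw [summand_eq, coeff_sub_one M hM]
      rw [← Finset.sum_add_sum_compl A]
      have h1 : ∑ i ∈ A, (if i ∈ A then u i else -u i) = ∑ i ∈ A, u i :=
        Finset.sum_congr rfl fun i hi => if_pos hi
      have h2 : ∑ i ∈ Aᶜ, (if i ∈ A then u i else -u i) = ∑ i ∈ Aᶜ, (-u i) :=
        Finset.sum_congr rfl fun i hi => if_neg (Finset.mem_compl.mp hi)
      have h3 : ∑ i ∈ A, u i + ∑ i ∈ Aᶜ, u i = ∑ m, u m := Finset.sum_add_sum_compl A u
      rw [h1, h2, Finset.sum_neg_distrib]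
      linarith
    rw [Finset.sum_congr rfl step, Finset.sum_sub_distrib, Finset.sum_const,
      Finset.card_powersetCard, Finset.card_univ, Fintype.card_fin, ← Finset.mul_sum]
    rcases Nat.eq_zero_or_pos H with h0 | hpos
    · subst h0
      rw [Finset.powersetCard_zero]
      simp [intChoose]
    · rw [sum_sum_mem M H u hpos]
      have hpascal : M.choose H = (M - 1).choose (H - 1) + (M - 1).choose H := by
        obtain ⟨M', rfl⟩ := Nat.exists_eq_add_of_le hM
        obtain ⟨H', rfl⟩ := Nat.exists_eq_add_of_le hpos
        simp [Nat.choose_succ_succ, Nat.add_comm]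
      have hic1 : intChoose (M - 1) ((H : ℤ) - 1) = ((M - 1).choose (H - 1) : ℝ) := by
        rw [intChoose, if_pos (by omega)]
        have : ((H : ℤ) - 1).toNat = H - 1 := by omega
        rw [this]
      have hic2 : intChoose (M - 1) (H : ℤ) = ((M - 1).choose H : ℝ) := by
        rw [intChoose, if_pos (by positivity)]
        simp
      rw [hic1, hic2, hpascal]
      ring
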